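/- Let ω̄_h⁰ be a mesh on [0,X] with J₀ nodes intervals and let {λ⁰, w} be an eigenpair of the generalized eigenvalue problem −∂̂_x ∂̄_x w = λ⁰ s_N w on ω̄_h⁰. For K ≥ 1, construct the mesh ω̄_h^{0,K} on [0,X] by tiling [0,X] with K copies of the 1/K-scaled mesh ω̄_h⁰, where odd-numbered copies are reflected: nodes x_{2kJ₀+l} = 2kX/K + x_l⁰/K (0 ≤ l ≤ J₀−1, 0 ≤ 2k < K) and x_{(2k−1)J₀+l} = 2kX/K − x_{J₀−l}⁰/K (0 ≤ l ≤ J₀−1, 1 ≤ 2k−1 < K), x_J = X with J = J₀K. Define Π_K w by (Π_K w)_{2kJ₀+l} = w_l and (Π_K w)_{(2k−1)J₀+l} = −w_{J₀−l}. Then {λ⁰K², Π_K w} is an eigenpair of the generalized eigenvalue problem on ω̄_h^{0,K}. -/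

import Mathlib

/-- Steps of a mesh given by its nodes `x`. -/
noncomputable def step (x : ℕ → ℝ) (j : ℕ) : ℝ := x j - x (j-1)

/-- Discrete Laplacian on the non-uniform mesh with nodes `x`. -/
noncomputable def lap (x : ℕ → ℝ) (W : ℕ → ℂ) (j : ℕ) : ℂ :=
  ((W (j+1) - W j) / (step x (j+1) : ℂ) - (W j - W (j-1)) / (step x j : ℂ))
    / (((step x j + step x (j+1))/2 : ℝ) : ℂ)

/-- Numerov averaging operator on the non-uniform mesh with nodes `x`. -/
noncomputable def sN (x : ℕ → ℝ) (W : ℕ → ℂ) (j : ℕ) : ℂ :=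
  (1/12 : ℂ) * ((2 - (step x (j+1))^2 / (step x j * ((step x j + step x (j+1))/2)) : ℝ) : ℂ) * W (j-1)
  + (5/6 : ℂ) * ((1 + (step x (j+1) - step x j)^2 / (5 * step x j * step x (j+1)) : ℝ) : ℂ) * W j
  + (1/12 : ℂ) * ((2 - (step x j)^2 / (step x (j+1) * ((step x j + step x (j+1))/2)) : ℝ) : ℂ) * W (j+1)

/-- Nodes of the mesh `ω̄_h^{0,K}`: `K` scaled copies of the base mesh, odd copies reflected. -/
noncomputable def tiledMesh (X : ℝ) (J₀ K : ℕ) (x0 : ℕ → ℝ) (j : ℕ) : ℝ :=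
  if (j / J₀) % 2 = 0 then ((j / J₀ : ℕ) : ℝ) * X / K + x0 (j % J₀) / K
  else (((j / J₀ : ℕ) : ℝ) + 1) * X / K - x0 (J₀ - j % J₀) / K

/-- The extension operator `Π_K`. -/
def PiK (J₀ : ℕ) (w : ℕ → ℂ) (j : ℕ) : ℂ :=
  if (j / J₀) % 2 = 0 then w (j % J₀) else -w (J₀ - j % J₀)

lemma eig_scale (a b k wm w0 wp lam : ℂ) (ha : a ≠ 0) (hb : b ≠ 0) (hab : a + b ≠ 0) (hk : k ≠ 0)
    (h : -(((wp - w0)/b - (w0 - wm)/a)/((a+b)/2)) =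
      lam * ((1/12) * (2 - b^2/(a*((a+b)/2))) * wm + (5/6) * (1 + (b-a)^2/(5*a*b)) * w0
        + (1/12) * (2 - a^2/(b*((a+b)/2))) * wp)) :
    -(((wp - w0)/(b/k) - (w0 - wm)/(a/k))/((a/k+b/k)/2)) =
      (lam * k^2) * ((1/12) * (2 - (b/k)^2/((a/k)*((a/k+b/k)/2))) * wm
        + (5/6) * (1 + (b/k-a/k)^2/(5*(a/k)*(b/k))) * w0
        + (1/12) * (2 - (a/k)^2/((b/k)*((a/k+b/k)/2))) * wp) := by
  have e1 : ∀ x : ℂ, x/(b/k) = k*(x/b) := fun x => by field_simp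
  have e2 : ∀ x : ℂ, x/(a/k) = k*(x/a) := fun x => by field_simp
  have ed : (a/k+b/k)/2 = (a+b)/(k*2) := by rw [← add_div, div_div]
  have e3 : ∀ x : ℂ, x/((a/k+b/k)/2) = k*(x/((a+b)/2)) := fun x => by
    rw [ed, div_div_eq_mul_div, div_div_eq_mul_div]; ring
  have e4 : (b/k)^2/((a/k)*((a/k+b/k)/2)) = b^2/(a*((a+b)/2)) := by
    rw [ed]; field_simp
  have e5 : (a/k)^2/((b/k)*((a/k+b/k)/2)) = a^2/(b*((a+b)/2)) := by
    rw [ed]; field_simp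
  have e6 : (b/k-a/k)^2/(5*(a/k)*(b/k)) = (b-a)^2/(5*a*b) := by
    field_simp
  rw [e1, e2, e4, e5, e6]
  rw [show k*((wp-w0)/b) - k*((w0-wm)/a) = k*((wp-w0)/b - (w0-wm)/a) by ring, e3]
  linear_combination (k^2) * h

lemma eig_reflect (a b wm w0 wp lam : ℂ)
    (h : -(((wp - w0)/b - (w0 - wm)/a)/((a+b)/2)) =
      lam * ((1/12) * (2 - b^2/(a*((a+b)/2))) * wm + (5/6) * (1 + (b-a)^2/(5*a*b)) * w0
        + (1/12) * (2 - a^2/(b*((a+b)/2))) * wp)) :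
    -((((-wm) - (-w0))/a - ((-w0) - (-wp))/b)/((b+a)/2)) =
      lam * ((1/12) * (2 - a^2/(b*((b+a)/2))) * (-wp) + (5/6) * (1 + (a-b)^2/(5*b*a)) * (-w0)
        + (1/12) * (2 - b^2/(a*((b+a)/2))) * (-wm)) := by
  rw [show (b+a) = (a+b) by ring, show (a-b)^2 = (b-a)^2 by ring, show (5:ℂ)*b*a = 5*a*b by ring]
  linear_combination -h

lemma qr1 (J₀ : ℕ) (hJ : 1 ≤ J₀) (q : ℕ) : (J₀*q+J₀)/J₀ = q+1 ∧ (J₀*q+J₀) % J₀ = 0 := by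
  constructor
  · rw [show J₀*q+J₀ = J₀*(q+1) by ring, Nat.mul_div_cancel_left _ hJ]
  · rw [show J₀*q+J₀ = J₀*(q+1) by ring, Nat.mul_mod_right]

lemma qr2 (J₀ : ℕ) (q l : ℕ) (hl : l < J₀) : (J₀*q+l)/J₀ = q ∧ (J₀*q+l) % J₀ = l := by
  constructor
  · rw [Nat.mul_add_div (by omega), Nat.div_eq_of_lt hl]; omega
  · rw [Nat.mul_add_mod, Nat.mod_eq_of_lt hl]

lemma mesh_val (X : ℝ) (J₀ K : ℕ) (hJ : 1 ≤ J₀) (x0 : ℕ → ℝ) (hx00 : x0 0 = 0) (hx0J : x0 J₀ = X)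
    (q l : ℕ) (hl : l ≤ J₀) :
    tiledMesh X J₀ K x0 (J₀*q+l)
      = if q % 2 = 0 then ((q:ℝ)*X + x0 l)/K else (((q:ℝ)+1)*X - x0 (J₀-l))/K := by
  rcases eq_or_lt_of_le hl with heq | hl
  · rw [heq]
    unfold tiledMesh
    rw [(qr1 J₀ hJ q).1, (qr1 J₀ hJ q).2]
    rcases Nat.even_or_odd q with hq | hq
    · have hq2 : q % 2 = 0 := Nat.even_iff.mp hq
      have hq2' : (q+1) % 2 = 1 := by omega
      simp only [hq2, hq2', if_pos rfl]
      norm_num [hx0J]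
      push_cast; ring
    · have hq2 : q % 2 = 1 := Nat.odd_iff.mp hq
      have hq2' : (q+1) % 2 = 0 := by omega
      simp only [hq2, hq2', Nat.sub_self]
      norm_num [hx00]
      try push_cast; ring
  · unfold tiledMesh
    rw [(qr2 J₀ q l hl).1, (qr2 J₀ q l hl).2]
    split <;> ring

lemma PiK_val (J₀ : ℕ) (hJ : 1 ≤ J₀) (w : ℕ → ℂ) (hw0 : w 0 = 0) (hwJ : w J₀ = 0)
    (q l : ℕ) (hl : l ≤ J₀) :
    PiK J₀ w (J₀*q+l) = if q % 2 = 0 then w l else -w (J₀-l) := by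
  rcases eq_or_lt_of_le hl with heq | hl
  · rw [heq]
    unfold PiK
    rw [(qr1 J₀ hJ q).1, (qr1 J₀ hJ q).2]
    rcases Nat.even_or_odd q with hq | hq
    · have hq2 : q % 2 = 0 := Nat.even_iff.mp hq
      have hq2' : (q+1) % 2 = 1 := by omega
      simp [hq2, hq2', hwJ]
    · have hq2 : q % 2 = 1 := Nat.odd_iff.mp hq
      have hq2' : (q+1) % 2 = 0 := by omega
      simp [hq2, hq2', hw0]
  · unfold PiK
    rw [(qr2 J₀ q l hl).1, (qr2 J₀ q l hl).2]

lemma step_val (X : ℝ) (J₀ K : ℕ) (hJ : 1 ≤ J₀) (x0 : ℕ → ℝ) (hx00 : x0 0 = 0) (hx0J : x0 J₀ = X)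
    (q l : ℕ) (hl1 : 1 ≤ l) (hl : l ≤ J₀) :
    step (tiledMesh X J₀ K x0) (J₀*q+l)
      = if q % 2 = 0 then (x0 l - x0 (l-1))/K else (x0 (J₀-l+1) - x0 (J₀-l))/K := by
  unfold step
  have h1 : J₀*q+l-1 = J₀*q+(l-1) := by omega
  rw [h1, mesh_val X J₀ K hJ x0 hx00 hx0J q l hl,
      mesh_val X J₀ K hJ x0 hx00 hx0J q (l-1) (by omega)]
  have h2 : J₀-(l-1) = J₀-l+1 := by omega
  rw [h2]
  split <;> ring

set_option maxHeartbeats 3200000 in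
theorem tiled_eigenpair (X : ℝ) (hX : 0 < X) (J₀ K : ℕ) (hJ₀ : 2 ≤ J₀) (hK : 1 ≤ K)
    (x0 : ℕ → ℝ) (hx00 : x0 0 = 0) (hx0J : x0 J₀ = X)
    (hmono : ∀ j < J₀, x0 j < x0 (j+1))
    (w : ℕ → ℂ) (lam : ℂ)
    (hw0 : w 0 = 0) (hwJ : w J₀ = 0) (hwne : ∃ j ≤ J₀, w j ≠ 0)
    (heig : ∀ j, 1 ≤ j → j ≤ J₀ - 1 → -lap x0 w j = lam * sN x0 w j) :
    PiK J₀ w 0 = 0 ∧ PiK J₀ w (J₀ * K) = 0 ∧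
    (∃ j ≤ J₀ * K, PiK J₀ w j ≠ 0) ∧
    ∀ j, 1 ≤ j → j ≤ J₀ * K - 1 →
      -lap (tiledMesh X J₀ K x0) (PiK J₀ w) j
        = (lam * (K : ℂ)^2) * sN (tiledMesh X J₀ K x0) (PiK J₀ w) j := by
  have hJ1 : 1 ≤ J₀ := by omega
  have hKC : (K : ℂ) ≠ 0 := by exact_mod_cast (Nat.cast_ne_zero (R := ℂ)).mpr (by omega)
  refine ⟨?_, ?_, ?_, ?_⟩
  · have h := PiK_val J₀ hJ1 w hw0 hwJ 0 0 (by omega)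
    simpa [hw0] using h
  · have h := PiK_val J₀ hJ1 w hw0 hwJ K 0 (by omega)
    simp only [Nat.add_zero] at h
    rw [h]
    split <;> simp [hw0, hwJ]
  · obtain ⟨j, hj, hne⟩ := hwne
    have hjlt : j < J₀ := by
      rcases lt_or_eq_of_le hj with h | h
      · exact h
      · exact absurd (h ▸ hwJ) hne
    refine ⟨j, le_trans (le_of_lt hjlt) (Nat.le_mul_of_pos_right _ (by omega)), ?_⟩
    have h := PiK_val J₀ hJ1 w hw0 hwJ 0 j (le_of_lt hjlt)
    simp only [Nat.mul_zero, Nat.zero_add] at h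
    simpa using h ▸ hne
  · intro j hj1 hj2
    obtain ⟨q, l, hlJ, rfl⟩ : ∃ q l, l < J₀ ∧ j = J₀*q + l :=
      ⟨j/J₀, j%J₀, Nat.mod_lt _ (by omega), (Nat.div_add_mod j J₀).symm⟩
    have mv := mesh_val X J₀ K hJ1 x0 hx00 hx0J
    have pv := PiK_val J₀ hJ1 w hw0 hwJ
    have sv := step_val X J₀ K hJ1 x0 hx00 hx0J
    by_cases hl0 : l = 0
    · -- junction case
      subst hl0
      simp only [Nat.add_zero] at hj1 hj2 ⊢
      have hq1 : 1 ≤ q := by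
        rcases Nat.eq_zero_or_pos q with rfl | h
        · simp at hj1
        · exact h
      have eq0 : J₀*q = J₀*(q-1)+J₀ := by
        rw [← Nat.mul_succ]; congr 1; omega
      have e1 : J₀*q-1 = J₀*(q-1)+(J₀-1) := by omega
      rcases Nat.even_or_odd q with hq | hq
      · have hq2 : q % 2 = 0 := Nat.even_iff.mp hq
        have hq2' : (q-1) % 2 = 1 := by omega
        have S1 : step (tiledMesh X J₀ K x0) (J₀*q) = (x0 1 - x0 0)/K := by
          rw [eq0, sv (q-1) J₀ (by omega) le_rfl, if_neg (by omega)]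
          simp
        have S2 : step (tiledMesh X J₀ K x0) (J₀*q+1) = (x0 1 - x0 0)/K := by
          rw [sv q 1 (by omega) (by omega), if_pos hq2]
        have W0 : PiK J₀ w (J₀*q) = 0 := by
          rw [eq0, pv (q-1) J₀ le_rfl]
          split <;> simp [hw0, hwJ]
        have Wm : PiK J₀ w (J₀*q-1) = -w 1 := by
          rw [e1, pv (q-1) (J₀-1) (by omega), if_neg (by omega),
              show J₀-(J₀-1) = 1 by omega]
        have Wp : PiK J₀ w (J₀*q+1) = w 1 := by
          rw [pv q 1 (by omega), if_pos hq2]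
        simp only [lap, sN, S1, S2, W0, Wm, Wp]
        ring
      · have hq2 : ¬ q % 2 = 0 := by
          have := Nat.odd_iff.mp hq; omega
        have hq2' : (q-1) % 2 = 0 := by
          have := Nat.odd_iff.mp hq; omega
        have S1 : step (tiledMesh X J₀ K x0) (J₀*q) = (x0 J₀ - x0 (J₀-1))/K := by
          rw [eq0, sv (q-1) J₀ (by omega) le_rfl, if_pos hq2']
        have S2 : step (tiledMesh X J₀ K x0) (J₀*q+1) = (x0 J₀ - x0 (J₀-1))/K := by
          rw [sv q 1 (by omega) (by omega), if_neg hq2, show J₀-1+1 = J₀ by omega]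
        have W0 : PiK J₀ w (J₀*q) = 0 := by
          rw [eq0, pv (q-1) J₀ le_rfl]
          split <;> simp [hw0, hwJ]
        have Wm : PiK J₀ w (J₀*q-1) = w (J₀-1) := by
          rw [e1, pv (q-1) (J₀-1) (by omega), if_pos hq2']
        have Wp : PiK J₀ w (J₀*q+1) = -w (J₀-1) := by
          rw [pv q 1 (by omega), if_neg hq2]
        simp only [lap, sN, S1, S2, W0, Wm, Wp]
        ring
    · -- interior case
      have hl1 : 1 ≤ l := by omega
      have em : J₀*q+l-1 = J₀*q+(l-1) := by omega
      have ep : J₀*q+l+1 = J₀*q+(l+1) := by omega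
      simp only [lap, sN, em, ep]
      rcases Nat.even_or_odd q with hq | hq
      · have hq2 : q % 2 = 0 := Nat.even_iff.mp hq
        have S1 : step (tiledMesh X J₀ K x0) (J₀*q+l) = (x0 l - x0 (l-1))/K := by
          rw [sv q l hl1 (le_of_lt hlJ), if_pos hq2]
        have S2 : step (tiledMesh X J₀ K x0) (J₀*q+(l+1)) = (x0 (l+1) - x0 l)/K := by
          rw [sv q (l+1) (by omega) (by omega), if_pos hq2]
          simp
        have Wm : PiK J₀ w (J₀*q+(l-1)) = w (l-1) := by
          rw [pv q (l-1) (by omega), if_pos hq2]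
        have W0 : PiK J₀ w (J₀*q+l) = w l := by
          rw [pv q l (le_of_lt hlJ), if_pos hq2]
        have Wp : PiK J₀ w (J₀*q+(l+1)) = w (l+1) := by
          rw [pv q (l+1) (by omega), if_pos hq2]
        rw [S1, S2, Wm, W0, Wp]
        have key := heig l hl1 (by omega)
        simp only [lap, sN, step, Nat.add_sub_cancel] at key
        have ha : ((x0 l : ℂ) - (x0 (l-1) : ℂ)) ≠ 0 := by
          have := hmono (l-1) (by omega)
          rw [show l-1+1 = l by omega] at this
          exact_mod_cast sub_ne_zero.mpr (by exact_mod_cast this.ne')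
        have hb : ((x0 (l+1) : ℂ) - (x0 l : ℂ)) ≠ 0 := by
          have := hmono l hlJ
          exact_mod_cast sub_ne_zero.mpr (by exact_mod_cast this.ne')
        have hab : ((x0 l : ℂ) - (x0 (l-1) : ℂ)) + ((x0 (l+1) : ℂ) - (x0 l : ℂ)) ≠ 0 := by
          have h1 := hmono (l-1) (by omega)
          rw [show l-1+1 = l by omega] at h1
          have h2 := hmono l hlJ
          have : (x0 l - x0 (l-1)) + (x0 (l+1) - x0 l) > 0 := by linarith
          intro hcon
          have : ((x0 l - x0 (l-1) : ℝ) : ℂ) + ((x0 (l+1) - x0 l : ℝ) : ℂ) = 0 := by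
            push_cast; push_cast at hcon; linear_combination hcon
          rw [← Complex.ofReal_add] at this
          exact absurd (Complex.ofReal_eq_zero.mp this) (by linarith)
        push_cast at key ⊢
        have G := eig_scale _ _ _ _ _ _ _ ha hb hab hKC key
        linear_combination G
      · have hq2 : ¬ q % 2 = 0 := by have := Nat.odd_iff.mp hq; omega
        have S1 : step (tiledMesh X J₀ K x0) (J₀*q+l) = (x0 (J₀-l+1) - x0 (J₀-l))/K := by
          rw [sv q l hl1 (le_of_lt hlJ), if_neg hq2]
        have S2 : step (tiledMesh X J₀ K x0) (J₀*q+(l+1)) = (x0 (J₀-l) - x0 (J₀-l-1))/K := by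
          rw [sv q (l+1) (by omega) (by omega), if_neg hq2,
              show J₀-(l+1)+1 = J₀-l by omega, show J₀-(l+1) = J₀-l-1 by omega]
        have Wm : PiK J₀ w (J₀*q+(l-1)) = -w (J₀-l+1) := by
          rw [pv q (l-1) (by omega), if_neg hq2, show J₀-(l-1) = J₀-l+1 by omega]
        have W0 : PiK J₀ w (J₀*q+l) = -w (J₀-l) := by
          rw [pv q l (le_of_lt hlJ), if_neg hq2]
        have Wp : PiK J₀ w (J₀*q+(l+1)) = -w (J₀-l-1) := by
          rw [pv q (l+1) (by omega), if_neg hq2, show J₀-(l+1) = J₀-l-1 by omega]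
        rw [S1, S2, Wm, W0, Wp]
        have key := heig (J₀-l) (by omega) (by omega)
        simp only [lap, sN, step, Nat.add_sub_cancel] at key
        have h1 := hmono (J₀-l-1) (by omega)
        rw [show J₀-l-1+1 = J₀-l by omega] at h1
        have h2 := hmono (J₀-l) (by omega)
        have ha : ((x0 (J₀-l) : ℂ) - (x0 (J₀-l-1) : ℂ)) ≠ 0 := by
          exact_mod_cast sub_ne_zero.mpr (by exact_mod_cast h1.ne')
        have hb : ((x0 (J₀-l+1) : ℂ) - (x0 (J₀-l) : ℂ)) ≠ 0 := by
          exact_mod_cast sub_ne_zero.mpr (by exact_mod_cast h2.ne')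
        have hab : ((x0 (J₀-l+1) : ℂ) - (x0 (J₀-l) : ℂ)) + ((x0 (J₀-l) : ℂ) - (x0 (J₀-l-1) : ℂ)) ≠ 0 := by
          have : (x0 (J₀-l+1) - x0 (J₀-l)) + (x0 (J₀-l) - x0 (J₀-l-1)) > 0 := by linarith
          intro hcon
          have h3 : ((x0 (J₀-l+1) - x0 (J₀-l) : ℝ) : ℂ) + ((x0 (J₀-l) - x0 (J₀-l-1) : ℝ) : ℂ) = 0 := by
            push_cast; push_cast at hcon; linear_combination hcon
          rw [← Complex.ofReal_add] at h3
          exact absurd (Complex.ofReal_eq_zero.mp h3) (by linarith)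
        push_cast at key ⊢
        have G := eig_scale _ _ (K:ℂ) _ _ _ lam hb ha hab hKC
          (eig_reflect _ _ _ _ _ _ key)
        linear_combination G
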